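/- arXiv:1811.03035 — 4 statements merged into one kernel-verified Lean document; each statement's English description precedes it below -/
import Mathlib

section
/- Let A be a nonempty finite set and Z_a (a ∈ A) integrable real random variables on a probability space (Ω, 𝓕, ℙ). If the optimal Bayesian simple regret is zero, i.e. E[max_{a∈A} Z_a] = max_{a∈A} E[Z_a], then for every sub-σ-algebra 𝒢 ⊆ 𝓕 the value of computation vanishes: E[max_{a∈A} E[Z_a | 𝒢]] = max_{a∈A} E[Z_a]. -/
open MeasureTheory

lemma integrable_sup'_aux {Ω : Type*} {mΩ : MeasurableSpace Ω} {μ : Measure Ω}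
    {A : Type*} (s : Finset A) (hs : s.Nonempty) (f : A → Ω → ℝ)
    (hf : ∀ a, Integrable (f a) μ) :
    Integrable (fun ω => s.sup' hs (fun a => f a ω)) μ := by
  induction hs using Finset.Nonempty.cons_induction with
  | singleton a => simp_rw [Finset.sup'_singleton]; exact hf a
  | cons a t ha ht ih =>
      simp_rw [Finset.sup'_cons ht]
      exact (hf a).sup ih

lemma integrable_iSup_aux {Ω : Type*} {mΩ : MeasurableSpace Ω} {μ : Measure Ω}
    {A : Type*} [Fintype A] [Nonempty A] (f : A → Ω → ℝ)
    (hf : ∀ a, Integrable (f a) μ) :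
    Integrable (fun ω => ⨆ a, f a ω) μ := by
  have h : (fun ω => ⨆ a, f a ω)
      = fun ω => Finset.univ.sup' Finset.univ_nonempty (fun a => f a ω) := by
    funext ω
    rw [Finset.sup'_univ_eq_ciSup]
  rw [h]
  exact integrable_sup'_aux _ _ f hf

/-- If the optimal Bayesian simple regret is zero, i.e.
`E[max_a Z_a] = max_a E[Z_a]`, then for every sub-σ-algebra `𝒢 ⊆ 𝓕` the value of computation
vanishes: `E[max_a E[Z_a | 𝒢]] = max_a E[Z_a]`. -/
theorem voc_stmt7 {Ω : Type*} {mΩ : MeasurableSpace Ω} (μ : Measure Ω)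
    [IsProbabilityMeasure μ] {A : Type*} [Fintype A] [Nonempty A] (Z : A → Ω → ℝ)
    (hZ : ∀ a, Integrable (Z a) μ)
    (hzero : (∫ ω, (⨆ a, Z a ω) ∂μ) = ⨆ a, ∫ ω, Z a ω ∂μ) :
    ∀ m : MeasurableSpace Ω, m ≤ mΩ →
      (∫ ω, (⨆ a, (μ[Z a|m]) ω) ∂μ) = ⨆ a, ∫ ω, Z a ω ∂μ := by
  intro m hm
  set g : A → Ω → ℝ := fun a => μ[Z a|m] with hg
  have hgint : ∀ a, Integrable (g a) μ := fun a => integrable_condExp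
  have hsupg : Integrable (fun ω => ⨆ a, g a ω) μ := integrable_iSup_aux g hgint
  have hsupZ : Integrable (fun ω => ⨆ a, Z a ω) μ := integrable_iSup_aux Z hZ
  -- upper bound
  have hle : ∀ a, g a ≤ᵐ[μ] μ[(fun ω => ⨆ b, Z b ω)|m] := by
    intro a
    exact condExp_mono (hZ a) hsupZ (Filter.Eventually.of_forall fun ω =>
      le_ciSup (Set.Finite.bddAbove (Set.finite_range (fun b => Z b ω))) a)
  have hle' : (fun ω => ⨆ a, g a ω) ≤ᵐ[μ] μ[(fun ω => ⨆ b, Z b ω)|m] := by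
    have := (MeasureTheory.ae_all_iff.2 hle)
    filter_upwards [this] with ω hω
    exact ciSup_le fun a => hω a
  have hupper : (∫ ω, (⨆ a, g a ω) ∂μ) ≤ ⨆ a, ∫ ω, Z a ω ∂μ := by
    calc (∫ ω, (⨆ a, g a ω) ∂μ) ≤ ∫ ω, (μ[(fun ω => ⨆ b, Z b ω)|m]) ω ∂μ :=
          integral_mono_ae hsupg integrable_condExp hle'
    _ = ∫ ω, (⨆ b, Z b ω) ∂μ := integral_condExp hm
    _ = ⨆ a, ∫ ω, Z a ω ∂μ := hzero
  have hlower : (⨆ a, ∫ ω, Z a ω ∂μ) ≤ ∫ ω, (⨆ a, g a ω) ∂μ := by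
    apply ciSup_le
    intro a
    calc (∫ ω, Z a ω ∂μ) = ∫ ω, g a ω ∂μ := (integral_condExp hm).symm
    _ ≤ ∫ ω, (⨆ b, g b ω) ∂μ := integral_mono (hgint a) hsupg
        (fun ω => le_ciSup (Set.Finite.bddAbove (Set.finite_range (fun b => g b ω))) a)
  exact le_antisymm hupper hlower
end

section
/- (Dynamic values dominate static values.) In the n-step MDP setting, for every n ∈ ℕ, every state s and every action a, the dynamic value dominates the static value: ψ_n(s,a) := E[Υ_n(s,a)] ≥ φ_n(s,a). -/
open MeasureTheory

private lemma integrable_sup' {Ω A : Type*} {mΩ : MeasurableSpace Ω} {μ : Measure Ω}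
    (t : Finset A) (ht : t.Nonempty) (f : A → Ω → ℝ)
    (hf : ∀ a ∈ t, Integrable (f a) μ) :
    Integrable (fun ω => t.sup' ht fun a => f a ω) μ := by
  revert hf
  induction ht using Finset.Nonempty.cons_induction with
  | singleton a =>
    intro hf
    simp only [Finset.sup'_singleton]
    exact hf a (by simp)
  | cons a t ha htne ih =>
    intro hf
    refine ((hf a (by simp)).sup (ih fun b hb => hf b (Finset.mem_cons_of_mem hb))).congr ?_
    filter_upwards with ω
    exact (Finset.sup'_cons htne (fun b => f b ω)).symm

/-- Pointwise `n`-step backup of the random frontier values `Z`: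
`Υ_0(s,a) = Z(s,a)` and
`Υ_{n+1}(s,a) = Σ_{s'} P(s,a,s')·(R(s,a,s') + γ·max_{a' ∈ A_{s'}} Υ_n(s',a'))`. -/
noncomputable def Upsilon {Ω S A : Type*} [Fintype S] (As : S → Finset A)
    (hAs : ∀ s, (As s).Nonempty) (P R : S → A → S → ℝ) (γ : ℝ)
    (Z : S → A → Ω → ℝ) : ℕ → S → A → Ω → ℝ
  | 0 => fun s a ω => Z s a ω
  | n + 1 => fun s a ω => ∑ s' : S, P s a s' *
      (R s a s' + γ * (As s').sup' (hAs s') fun a' => Upsilon As hAs P R γ Z n s' a' ω)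

/-- Deterministic `n`-step backup of a base value function: used for the static value `φ_n`
(base `(s,a) ↦ E[Z(s,a)]`) and, pointwise in `ω`, for the conditional static value `φ_n^𝒢`
(base `(s,a) ↦ E[Z(s,a)|𝒢](ω)`). -/
noncomputable def stepValue {S A : Type*} [Fintype S] (As : S → Finset A)
    (hAs : ∀ s, (As s).Nonempty) (P R : S → A → S → ℝ) (γ : ℝ)
    (base : S → A → ℝ) : ℕ → S → A → ℝ
  | 0 => base
  | n + 1 => fun s a => ∑ s' : S, P s a s' *
      (R s a s' + γ * (As s').sup' (hAs s') fun a' => stepValue As hAs P R γ base n s' a')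

/-- Dynamic values dominate static values: for every `n`, `s`, `a`,
`ψ_n(s,a) = E[Υ_n(s,a)] ≥ φ_n(s,a)`. -/
theorem voc_stmt12 {Ω S A : Type*} {mΩ : MeasurableSpace Ω} (μ : Measure Ω)
    [IsProbabilityMeasure μ] [Fintype S] [Nonempty S] [Fintype A] [Nonempty A]
    (As : S → Finset A) (hAs : ∀ s, (As s).Nonempty) (P R : S → A → S → ℝ)
    (hP : ∀ s a s', 0 ≤ P s a s') (hPsum : ∀ s a, ∑ s', P s a s' = 1)
    (γ : ℝ) (hγ : 0 ≤ γ) (Z : S → A → Ω → ℝ) (hZ : ∀ s a, Integrable (Z s a) μ) :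
    ∀ (n : ℕ) (s : S) (a : A),
      stepValue As hAs P R γ (fun s' a' => ∫ ω, Z s' a' ω ∂μ) n s a ≤
        ∫ ω, Upsilon As hAs P R γ Z n s a ω ∂μ := by
  have key : ∀ (n : ℕ) (s : S) (a : A),
      Integrable (Upsilon As hAs P R γ Z n s a) μ ∧
      stepValue As hAs P R γ (fun s' a' => ∫ ω, Z s' a' ω ∂μ) n s a ≤
        ∫ ω, Upsilon As hAs P R γ Z n s a ω ∂μ := by
    intro n
    induction n with
    | zero => intro s a; exact ⟨hZ s a, le_refl _⟩
    | succ n ih =>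
      intro s a
      have hint : ∀ s', Integrable
          (fun ω => (As s').sup' (hAs s') fun a' => Upsilon As hAs P R γ Z n s' a' ω) μ :=
        fun s' => integrable_sup' _ _ _ (fun a' _ => (ih s' a').1)
      have hterm : ∀ s' : S, Integrable (fun ω => P s a s' *
          (R s a s' + γ * (As s').sup' (hAs s') fun a' => Upsilon As hAs P R γ Z n s' a' ω)) μ :=
        fun s' => ((integrable_const (R s a s')).add ((hint s').const_mul γ)).const_mul _
      constructor
      · show Integrable (fun ω => ∑ s' : S, _) μ
        exact integrable_finset_sum _ fun s' _ => hterm s'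
      · have hsup : ∀ s', (As s').sup' (hAs s')
            (fun a' => stepValue As hAs P R γ (fun s' a' => ∫ ω, Z s' a' ω ∂μ) n s' a') ≤
            ∫ ω, (As s').sup' (hAs s') fun a' => Upsilon As hAs P R γ Z n s' a' ω ∂μ := by
          intro s'
          apply Finset.sup'_le
          intro a' ha'
          refine le_trans (ih s' a').2 (integral_mono (ih s' a').1 (hint s') ?_)
          intro ω
          exact Finset.le_sup' (fun a' => Upsilon As hAs P R γ Z n s' a' ω) ha'
        have hRHS : ∫ ω, Upsilon As hAs P R γ Z (n+1) s a ω ∂μ =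
            ∑ s' : S, P s a s' * (R s a s' +
              γ * ∫ ω, (As s').sup' (hAs s') fun a' => Upsilon As hAs P R γ Z n s' a' ω ∂μ) := by
          show ∫ ω, ∑ s' : S, _ ∂μ = _
          rw [integral_finset_sum _ fun s' _ => hterm s']
          refine Finset.sum_congr rfl fun s' _ => ?_
          rw [integral_const_mul, integral_add (integrable_const _) ((hint s').const_mul γ),
            integral_const_mul, integral_const]
          simp
        rw [hRHS]
        show ∑ s' : S, _ ≤ _
        refine Finset.sum_le_sum fun s' _ => ?_
        exact mul_le_mul_of_nonneg_left
          (add_le_add_right (mul_le_mul_of_nonneg_left (hsup s') hγ) _) (hP s a s')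
  exact fun n s a => (key n s a).2
end

section
/- (Static values cannot decrease in expectation after computations.) In the n-step MDP setting with a sub-σ-algebra 𝒢 ⊆ 𝓕, for every n ∈ ℕ, every state s and action a: E[φ_n^𝒢(s,a)] ≥ φ_n(s,a). -/
open MeasureTheory

/-- Static values cannot decrease in expectation after computations: for a
sub-σ-algebra `𝒢 ⊆ 𝓕`, for every `n`, `s`, `a`, `E[φ_n^𝒢(s,a)] ≥ φ_n(s,a)`. -/
theorem voc_stmt14 {Ω S A : Type*} {mΩ : MeasurableSpace Ω} (μ : Measure Ω)
    [IsProbabilityMeasure μ] [Fintype S] [Nonempty S] [Fintype A] [Nonempty A]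
    (As : S → Finset A) (hAs : ∀ s, (As s).Nonempty) (P R : S → A → S → ℝ)
    (hP : ∀ s a s', 0 ≤ P s a s') (hPsum : ∀ s a, ∑ s', P s a s' = 1)
    (γ : ℝ) (hγ : 0 ≤ γ) (Z : S → A → Ω → ℝ) (hZ : ∀ s a, Integrable (Z s a) μ)
    (m : MeasurableSpace Ω) (hm : m ≤ mΩ) :
    ∀ (n : ℕ) (s : S) (a : A),
      stepValue As hAs P R γ (fun s' a' => ∫ ω, Z s' a' ω ∂μ) n s a ≤
        ∫ ω, stepValue As hAs P R γ (fun s' a' => (μ[Z s' a'|m]) ω) n s a ∂μ := by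
  set F : ℕ → S → A → Ω → ℝ := fun n s a ω =>
    stepValue As hAs P R γ (fun s' a' => (μ[Z s' a'|m]) ω) n s a with hF
  have hint : ∀ n s a, Integrable (F n s a) μ := by
    intro n
    induction n with
    | zero => intro s a; exact integrable_condExp
    | succ n ih =>
        intro s a
        simp only [hF, stepValue]
        refine integrable_finset_sum _ fun s' _ => Integrable.const_mul ?_ _
        refine (integrable_const _).add (Integrable.const_mul ?_ _)
        exact integrable_sup' _ (hAs s') _ fun a' _ => ih s' a'
  intro n
  induction n with
  | zero =>
      intro s a
      simp only [stepValue, F]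
      rw [integral_condExp hm]
  | succ n ih =>
      intro s a
      simp only [stepValue]
      have hsupint : ∀ s' : S,
          Integrable (fun ω => (As s').sup' (hAs s') fun a' => F n s' a' ω) μ :=
        fun s' => integrable_sup' _ (hAs s') _ fun a' _ => hint n s' a'
      rw [integral_finset_sum]
      · refine Finset.sum_le_sum fun s' _ => ?_
        rw [integral_const_mul, integral_add (integrable_const _)
            ((hsupint s').const_mul _), integral_const, probReal_univ,
            smul_eq_mul, one_mul, integral_const_mul]
        refine mul_le_mul_of_nonneg_left (add_le_add_right
          (mul_le_mul_of_nonneg_left ?_ hγ) _) (hP s a s')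
        refine Finset.sup'_le _ _ fun a' ha' => le_trans (ih s' a') ?_
        refine integral_mono (hint n s' a') (hsupint s') fun ω => ?_
        exact Finset.le_sup' (fun b => F n s' b ω) ha'
      · intro s' _
        exact (((integrable_const _).add ((hsupint s').const_mul _)).const_mul _)
end

section
/- (VOC(φ_n)-greedy is myopically optimal: in MDPs, VOC with respect to the static value equals the expected decrease in the optimal Bayesian simple regret.) In the n-step MDP setting with a sub-σ-algebra 𝒢 ⊆ 𝓕, fix a state s. Define the prior optimal Bayesian simple regret BSR*(s; φ_n) := E[max_{a∈A_s} Υ_n(s,a)] − max_{a∈A_s} φ_n(s,a) and the posterior optimal Bayesian simple regret as the random variable BSR*_𝒢(s; φ_n) := E[max_{a∈A_s} Υ_n(s,a) | 𝒢] − max_{a∈A_s} φ_n^𝒢(s,a). Then VOC(𝒢; φ_n, s) := E[max_{a∈A_s} φ_n^𝒢(s,a)] − max_{a∈A_s} φ_n(s,a) satisfies VOC(𝒢; φ_n, s) = BSR*(s; φ_n) − E[BSR*_𝒢(s; φ_n)]. Consequently, among any family of sub-σ-algebras, one that maximizes VOC(·; φ_n, s) minimizes the expected posterior optimal Bayesian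 simple regret at s. -/
open MeasureTheory

lemma integrable_finset_sup' {Ω A : Type*} {mΩ' : MeasurableSpace Ω} {μ : Measure Ω}
    (t : Finset A) (ht : t.Nonempty) (f : A → Ω → ℝ)
    (hf : ∀ a ∈ t, Integrable (f a) μ) :
    Integrable (fun ω => t.sup' ht fun a => f a ω) μ := by
  classical
  revert hf
  refine Finset.Nonempty.cons_induction
    (motive := fun t ht => (∀ a ∈ t, Integrable (f a) μ) →
      Integrable (fun ω => t.sup' ht fun a => f a ω) μ) ?_ ?_ ht
  · intro a hf
    simp only [Finset.sup'_singleton]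
    exact hf a (by simp)
  · intro a t h hts ih hf
    simp only [Finset.sup'_cons hts]
    exact (hf a (by simp)).sup (ih fun b hb => hf b (by simp [hb]))

lemma integrable_stepped {Ω S A : Type*} {mΩ' : MeasurableSpace Ω} {μ : Measure Ω}
    [IsProbabilityMeasure μ] [Fintype S]
    (As : S → Finset A) (hAs : ∀ s, (As s).Nonempty) (P R : S → A → S → ℝ) (γ : ℝ)
    (W : S → A → Ω → ℝ) (hW : ∀ s a, Integrable (W s a) μ) (n : ℕ) :
    ∀ s a, Integrable (fun ω => stepValue As hAs P R γ (fun s' a' => W s' a' ω) n s a) μ := by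
  induction n with
  | zero => exact hW
  | succ n ih =>
      intro s a
      simp only [stepValue]
      refine integrable_finset_sum _ fun s' _ => ?_
      exact ((integrable_const _).add
        ((integrable_finset_sup' _ _ _ fun a' _ => ih s' a').const_mul γ)).const_mul (P s a s')

lemma integrable_upsilon {Ω S A : Type*} {mΩ' : MeasurableSpace Ω} {μ : Measure Ω}
    [IsProbabilityMeasure μ] [Fintype S]
    (As : S → Finset A) (hAs : ∀ s, (As s).Nonempty) (P R : S → A → S → ℝ) (γ : ℝ)
    (Z : S → A → Ω → ℝ) (hZ : ∀ s a, Integrable (Z s a) μ) (n : ℕ) :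
    ∀ s a, Integrable (Upsilon As hAs P R γ Z n s a) μ := by
  induction n with
  | zero => exact hZ
  | succ n ih =>
      intro s a
      simp only [Upsilon]
      refine integrable_finset_sum _ fun s' _ => ?_
      exact ((integrable_const _).add
        ((integrable_finset_sup' _ _ _ fun a' _ => ih s' a').const_mul γ)).const_mul (P s a s')


/-- VOC(φ_n)-greedy is myopically optimal: with prior optimal Bayesian simple
regret `BSR*(s; φ_n) = E[max_{a ∈ A_s} Υ_n(s,a)] − max_{a ∈ A_s} φ_n(s,a)` and posterior
optimal Bayesian simple regret
`BSR*_𝒢(s; φ_n)(ω) = E[max_{a ∈ A_s} Υ_n(s,a) | 𝒢](ω) − max_{a ∈ A_s} φ_n^𝒢(s,a)(ω)`,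
the value of computation `VOC(𝒢; φ_n, s) = E[max_{a ∈ A_s} φ_n^𝒢(s,a)] − max_{a ∈ A_s} φ_n(s,a)`
equals `BSR*(s; φ_n) − E[BSR*_𝒢(s; φ_n)]`; consequently a sub-σ-algebra with larger VOC has
smaller expected posterior optimal Bayesian simple regret at `s`. -/
theorem voc_stmt19 {Ω S A : Type*} {mΩ : MeasurableSpace Ω} (μ : Measure Ω)
    [IsProbabilityMeasure μ] [Fintype S] [Nonempty S] [Fintype A] [Nonempty A]
    (As : S → Finset A) (hAs : ∀ s, (As s).Nonempty) (P R : S → A → S → ℝ)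
    (hP : ∀ s a s', 0 ≤ P s a s') (hPsum : ∀ s a, ∑ s', P s a s' = 1)
    (γ : ℝ) (hγ : 0 ≤ γ) (Z : S → A → Ω → ℝ) (hZ : ∀ s a, Integrable (Z s a) μ)
    (n : ℕ) (s : S)
    (VOC : MeasurableSpace Ω → ℝ)
    (hVOC : ∀ m, VOC m =
      (∫ ω, (As s).sup' (hAs s)
          (fun a => stepValue As hAs P R γ (fun s' a' => (μ[Z s' a'|m]) ω) n s a) ∂μ) -
        (As s).sup' (hAs s)
          (fun a => stepValue As hAs P R γ (fun s' a' => ∫ ω, Z s' a' ω ∂μ) n s a))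
    (BSRpost : MeasurableSpace Ω → Ω → ℝ)
    (hBSRpost : ∀ m ω, BSRpost m ω =
      (μ[fun ω' => (As s).sup' (hAs s) fun a => Upsilon As hAs P R γ Z n s a ω'|m]) ω -
        (As s).sup' (hAs s)
          (fun a => stepValue As hAs P R γ (fun s' a' => (μ[Z s' a'|m]) ω) n s a))
    (m : MeasurableSpace Ω) (hm : m ≤ mΩ) :
    VOC m =
      ((∫ ω, (As s).sup' (hAs s) (fun a => Upsilon As hAs P R γ Z n s a ω) ∂μ) -
        (As s).sup' (hAs s)
          (fun a => stepValue As hAs P R γ (fun s' a' => ∫ ω, Z s' a' ω ∂μ) n s a)) -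
      ∫ ω, BSRpost m ω ∂μ ∧
    ∀ m' : MeasurableSpace Ω, m' ≤ mΩ → VOC m' ≤ VOC m →
      ∫ ω, BSRpost m ω ∂μ ≤ ∫ ω, BSRpost m' ω ∂μ := by
  classical
  have hMΥ : Integrable (fun ω => (As s).sup' (hAs s)
      fun a => Upsilon As hAs P R γ Z n s a ω) μ :=
    integrable_finset_sup' _ _ _ fun a _ => integrable_upsilon As hAs P R γ Z hZ n s a
  have key : ∀ m' : MeasurableSpace Ω, m' ≤ mΩ →
      VOC m' =
        ((∫ ω, (As s).sup' (hAs s) (fun a => Upsilon As hAs P R γ Z n s a ω) ∂μ) -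
          (As s).sup' (hAs s)
            (fun a => stepValue As hAs P R γ (fun s' a' => ∫ ω, Z s' a' ω ∂μ) n s a)) -
        ∫ ω, BSRpost m' ω ∂μ := by
    intro m' hm'
    haveI : SigmaFinite (μ.trim hm') := inferInstance
    have hφG : Integrable (fun ω => (As s).sup' (hAs s)
        fun a => stepValue As hAs P R γ (fun s' a' => (μ[Z s' a'|m']) ω) n s a) μ :=
      integrable_finset_sup' _ _ _ fun a _ =>
        integrable_stepped As hAs P R γ _ (fun s' a' => integrable_condExp) n s a
    have hBint : ∫ ω, BSRpost m' ω ∂μ =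
        (∫ ω, (μ[fun ω' => (As s).sup' (hAs s)
            fun a => Upsilon As hAs P R γ Z n s a ω'|m']) ω ∂μ) -
        ∫ ω, (As s).sup' (hAs s)
            (fun a => stepValue As hAs P R γ (fun s' a' => (μ[Z s' a'|m']) ω) n s a) ∂μ := by
      simp only [hBSRpost]
      exact integral_sub integrable_condExp hφG
    rw [hBint, integral_condExp hm', hVOC]
    ring
  refine ⟨key m hm, fun m' hm' hle => ?_⟩
  have h1 := key m hm
  have h2 := key m' hm'
  linarith
end
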